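/- Soundness and completeness of the broadcast-print abstraction: given (q, Λ) ∈ Q^b × 2^{Q^b}, we have (q_in, Λ_in) ⇒* (q, Λ) for some Λ_in ∈ {∅, {q_in}} if and only if there exist a b-configuration C_in ∈ I (initial star configuration) and a b-configuration C reachable from it with broadcast-print (q, Λ). -/

import Mathlib

namespace BN

/-- Actions of a broadcast protocol: broadcast `!!m`, reception `?m`, internal `τ`. -/
inductive Act (M : Type) : Type where
  | brd : M → Act M
  | rcv : M → Act M
  | tau : Act M

/-- A broadcast protocol: an initial state and a set of transitions. -/
structure Protocol (Q M : Type) : Type where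
  qin : Q
  delta : Set (Q × Act M × Q)

variable {Q M V : Type}

/-- `q` has an outgoing reception of `m`. -/
def canRecv (P : Protocol Q M) (q : Q) (m : M) : Prop :=
  ∃ q', (q, Act.rcv m, q') ∈ P.delta

/-- One step of the broadcast network semantics over topology `G`,
performed by vertex `v` taking transition `t`. -/
def Step (G : SimpleGraph V) (P : Protocol Q M) (v : V)
    (t : Q × Act M × Q) (L L' : V → Q) : Prop :=
  t ∈ P.delta ∧ L v = t.1 ∧ L' v = t.2.2 ∧
  (match t.2.1 with
   | Act.tau => ∀ u, u ≠ v → L' u = L u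
   | Act.brd m =>
       (∀ u, G.Adj v u →
          ((L u, Act.rcv m, L' u) ∈ P.delta ∨ (¬ canRecv P (L u) m ∧ L' u = L u))) ∧
       (∀ u, u ≠ v → ¬ G.Adj v u → L' u = L u)
   | Act.rcv _ => False)

def StepAny (G : SimpleGraph V) (P : Protocol Q M) (L L' : V → Q) : Prop :=
  ∃ v t, Step G P v t L L'

def Reach (G : SimpleGraph V) (P : Protocol Q M) : (V → Q) → (V → Q) → Prop :=
  Relation.ReflTransGen (StepAny G P)

def initConf (P : Protocol Q M) : V → Q := fun _ => P.qin

/-- `qf` is coverable over the class of all (finite) graph topologies. -/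
def Coverable (P : Protocol Q M) (qf : Q) : Prop :=
  ∃ (V' : Type) (_ : Fintype V') (G : SimpleGraph V') (L : V' → Q),
    Reach G P (initConf P) L ∧ ∃ v, L v = qf

/-- A tree topology: a prefix-closed finite set of words over ℕ containing ε. -/
structure TreeTopo : Type where
  verts : Finset (List ℕ)
  nil_mem : ([] : List ℕ) ∈ verts
  prefixClosed : ∀ w ∈ verts, ∀ w' : List ℕ, w' <+: w → w' ∈ verts

abbrev TreeTopo.Vert (T : TreeTopo) : Type := {w : List ℕ // w ∈ T.verts}

def TreeTopo.root (T : TreeTopo) : T.Vert := ⟨[], T.nil_mem⟩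

/-- The graph of a tree topology: each word `w ++ [x]` is adjacent to its parent `w`. -/
def TreeTopo.graph (T : TreeTopo) : SimpleGraph T.Vert where
  Adj u v := (∃ x : ℕ, (v : List ℕ) = (u : List ℕ) ++ [x]) ∨
             (∃ x : ℕ, (u : List ℕ) = (v : List ℕ) ++ [x])
  symm := by constructor; intro u v h; exact h.symm
  loopless := by
    constructor
    intro u h
    rcases h with ⟨x, hx⟩ | ⟨x, hx⟩ <;> simpa using congrArg List.length hx

def CoverableWith (T : TreeTopo) (P : Protocol Q M) (qf : Q) : Prop :=
  ∃ L : T.Vert → Q, Reach T.graph P (initConf P) L ∧ ∃ u, L u = qf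

def CoverableTreeRoot (P : Protocol Q M) (qf : Q) : Prop :=
  ∃ (T : TreeTopo) (L : T.Vert → Q),
    Reach T.graph P (initConf P) L ∧ L T.root = qf

/-- `(T, lam)` is the unfolding of graph `G` at vertex `v` to depth `n`. -/
structure IsUnfolding {V : Type} (G : SimpleGraph V) (v : V) (n : ℕ)
    (T : TreeTopo) (lam : T.Vert → V) : Prop where
  root_lbl : lam T.root = v
  depth_le : ∀ w ∈ T.verts, w.length ≤ n
  root_children :
    Set.BijOn lam {u : T.Vert | ∃ x : ℕ, (u : List ℕ) = [x]} (G.neighborSet v)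
  children : ∀ (u : T.Vert) (w : List ℕ) (hw : w ∈ T.verts) (x : ℕ),
      (u : List ℕ) = w ++ [x] → (u : List ℕ).length < n →
      Set.BijOn lam {u' : T.Vert | ∃ y : ℕ, (u' : List ℕ) = (u : List ℕ) ++ [y]}
        (G.neighborSet (lam u) \ {lam ⟨w, hw⟩})
  no_deep : ∀ u : T.Vert, n ≤ (u : List ℕ).length →
      ∀ x : ℕ, (u : List ℕ) ++ [x] ∉ T.verts

/-- Phase tags annotating states: `zero` (phase 0), broadcast phase `j`, reception phase `j`. -/
inductive PTag : Type where
  | zero : PTag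
  | bph : ℕ → PTag
  | rph : ℕ → PTag
deriving DecidableEq

def bOf : ℕ → PTag
  | 0 => .zero
  | j+1 => .bph (j+1)

def rOf : ℕ → PTag
  | 0 => .zero
  | j+1 => .rph (j+1)

/-- `φ` witnesses that `P` is `k`-phase-bounded. -/
def IsPhaseAssignment (k : ℕ) (P : Protocol Q M) (φ : Q → PTag) : Prop :=
  φ P.qin = .zero ∧
  (∀ q : Q, φ q = .zero ∨ ∃ j, 1 ≤ j ∧ j ≤ k ∧ (φ q = .bph j ∨ φ q = .rph j)) ∧
  ∀ t ∈ P.delta,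
    (match t.2.1 with
     | Act.tau => φ t.1 = φ t.2.2
     | Act.brd _ =>
         (∃ j, 1 ≤ j ∧ j ≤ k ∧ φ t.1 = .bph j ∧ φ t.2.2 = .bph j) ∨
         (∃ i, i < k ∧ φ t.1 = rOf i ∧ φ t.2.2 = .bph (i+1))
     | Act.rcv _ =>
         (∃ j, 1 ≤ j ∧ j ≤ k ∧ φ t.1 = .rph j ∧ φ t.2.2 = .rph j) ∨
         (∃ i, i < k ∧ φ t.1 = bOf i ∧ φ t.2.2 = .rph (i+1)) ∨
         (1 ≤ k ∧ φ t.1 = .bph k ∧ φ t.2.2 = .rph k))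

def IsPhaseBounded (k : ℕ) (P : Protocol Q M) : Prop :=
  ∃ φ : Q → PTag, IsPhaseAssignment k P φ

/-- The `k`-unfolding `Pₖ` of a protocol `P`. -/
def unfoldP (P : Protocol Q M) (k : ℕ) : Protocol (Q × PTag) M where
  qin := (P.qin, .zero)
  delta :=
    {t | ∃ q p, (q, Act.tau, p) ∈ P.delta ∧ t = ((q, .zero), Act.tau, (p, .zero))} ∪
    {t | ∃ q p α j, 1 ≤ j ∧ j ≤ k ∧ (q, α, p) ∈ P.delta ∧
        (α = Act.tau ∨ ∃ m, α = Act.rcv m) ∧ t = ((q, .rph j), α, (p, .rph j))} ∪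
    {t | ∃ q p α j, 1 ≤ j ∧ j ≤ k ∧ (q, α, p) ∈ P.delta ∧
        (α = Act.tau ∨ ∃ m, α = Act.brd m) ∧ t = ((q, .bph j), α, (p, .bph j))} ∪
    {t | ∃ q p m j, j < k ∧ (q, Act.brd m, p) ∈ P.delta ∧
        t = ((q, rOf j), Act.brd m, (p, .bph (j+1)))} ∪
    {t | ∃ q p m j, j < k ∧ (q, Act.rcv m, p) ∈ P.delta ∧
        t = ((q, bOf j), Act.rcv m, (p, .rph (j+1)))} ∪
    {t | ∃ q p m, 1 ≤ k ∧ (q, Act.rcv m, p) ∈ P.delta ∧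
        t = ((q, .bph k), Act.rcv m, (p, .rph k))}

/-- Star topology: root `none` adjacent to every leaf `some i`, no other edges. -/
def starGraph (ι : Type) : SimpleGraph (Option ι) where
  Adj u v := (u = none ∧ v ≠ none) ∨ (v = none ∧ u ≠ none)
  symm := by constructor; intro u v h; tauto
  loopless := by constructor; intro u h; tauto

/-- For a 1-phase-bounded protocol with witness `φ`, `Q^b = Q₀ ∪ Q₁^b`. -/
def Qb (φ : Q → PTag) : Set Q := {q | φ q = .zero ∨ φ q = .bph 1}

/-- The set component of the broadcast-print of a star configuration. -/
def bprintSet {ι : Type} (φ : Q → PTag) (L : Option ι → Q) : Set Q :=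
  {q | q ∈ Qb φ ∧ ∃ i, L (some i) = q}

/-- The abstract transition relation `⇒` on broadcast-prints. -/
def PrintStep (P : Protocol Q M) (φ : Q → PTag) :
    (Q × Set Q) → (Q × Set Q) → Prop := fun pr pr' =>
  ∃ (ι : Type) (_ : Fintype ι) (L L' : Option ι → Q),
    StepAny (starGraph ι) P L L' ∧ L none ∈ Qb φ ∧ L' none ∈ Qb φ ∧
    pr = (L none, bprintSet φ L) ∧ pr' = (L' none, bprintSet φ L')

/-- Line topology on `Fin ℓ`: consecutive vertices are adjacent. -/
def lineGraph (ℓ : ℕ) : SimpleGraph (Fin ℓ) where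
  Adj i j := (i : ℕ) + 1 = (j : ℕ) ∨ (j : ℕ) + 1 = (i : ℕ)
  symm := by constructor; intro i j h; tauto
  loopless := by constructor; intro i h; rcases h with h | h <;> omega

/-- `t` is a broadcast transition. -/
def IsBrdT (t : Q × Act M × Q) : Prop := ∃ m, t.2.1 = Act.brd m

/-- In the execution described by `vs, ts` of length `n`, `i` is the first index at
which vertex `u` performs a broadcast. -/
def IsFirstBrd {V' : Type} (vs : ℕ → V') (ts : ℕ → Q × Act M × Q) (n : ℕ)
    (u : V') (i : ℕ) : Prop :=
  i < n ∧ vs i = u ∧ IsBrdT (ts i) ∧ ∀ j < i, vs j = u → ¬ IsBrdT (ts j)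

/-- Every transition of `u` occurs no later than every broadcast of `w`
(i.e. lastBroadcast(u) ≤ firstBroadcast(w)). -/
def BrdOrder {V' : Type} (n : ℕ) (vs : ℕ → V') (ts : ℕ → Q × Act M × Q)
    (u w : V') : Prop :=
  ∀ j j', j < n → j' < n → vs j = u → vs j' = w → IsBrdT (ts j') → j ≤ j'

/-- One application of the pair-coverability operator. -/
def pairStep (P : Protocol Q M) (S : Set (Q × Q)) : Set (Q × Q) :=
  S ∪
  {p | ∃ p₁, (p₁, p.2) ∈ S ∧ (p₁, Act.tau, p.1) ∈ P.delta} ∪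
  {p | ∃ p₂, (p.1, p₂) ∈ S ∧ (p₂, Act.tau, p.2) ∈ P.delta} ∪
  {p | ∃ p₁ p₂ m, (p₁, p₂) ∈ S ∧ (p₂, Act.brd m, p.2) ∈ P.delta ∧
      (p₁, Act.rcv m, p.1) ∈ P.delta} ∪
  {p | ∃ p₂ m, (p.1, p₂) ∈ S ∧ (p₂, Act.brd m, p.2) ∈ P.delta ∧ ¬ canRecv P p.1 m} ∪
  {p | p.1 = P.qin ∧ ∃ q', (p.2, q') ∈ S}

/-- The iteration `S₀ ⊆ S₁ ⊆ …` of the pair-coverability operator. -/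
def Siter (P : Protocol Q M) : ℕ → Set (Q × Q)
  | 0 => {(P.qin, P.qin)}
  | i+1 => pairStep P (Siter P i)



section PrintAbstractionProof

open Relation

variable {Q M : Type} {P : Protocol Q M} {φ : Q → PTag}

/-! ### Phase tag facts -/

lemma rcv_tag (hφ : IsPhaseAssignment 1 P φ) {a b : Q} {m : M}
    (h : (a, Act.rcv m, b) ∈ P.delta) : φ b = .rph 1 := by
  have H := hφ.2.2 _ h
  rcases H with ⟨j, hj1, hjk, _, h2⟩ | ⟨i, hi, _, h2⟩ | ⟨_, _, h2⟩
  · have : j = 1 := le_antisymm hjk hj1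
    subst this; exact h2
  · have : i = 0 := by omega
    subst this; exact h2
  · exact h2

lemma rcv_not_Qb (hφ : IsPhaseAssignment 1 P φ) {a b : Q} {m : M}
    (h : (a, Act.rcv m, b) ∈ P.delta) : b ∉ Qb φ := by
  have hb := rcv_tag hφ h
  rintro (h1 | h1) <;> rw [hb] at h1 <;> exact PTag.noConfusion h1

lemma tau_tag (hφ : IsPhaseAssignment 1 P φ) {a b : Q}
    (h : (a, Act.tau, b) ∈ P.delta) : φ a = φ b := hφ.2.2 _ h

lemma brd_tag (hφ : IsPhaseAssignment 1 P φ) {a b : Q} {m : M}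
    (h : (a, Act.brd m, b) ∈ P.delta) : a ∈ Qb φ ∧ b ∈ Qb φ := by
  have H := hφ.2.2 _ h
  rcases H with ⟨j, hj1, hjk, ha, hb⟩ | ⟨i, hi, ha, hb⟩
  · have : j = 1 := le_antisymm hjk hj1
    subst this; exact ⟨Or.inr ha, Or.inr hb⟩
  · have : i = 0 := by omega
    subst this; exact ⟨Or.inl ha, Or.inr hb⟩

lemma qin_Qb (hφ : IsPhaseAssignment 1 P φ) : P.qin ∈ Qb φ := Or.inl hφ.1

/-! ### Star graph adjacency -/

lemma star_adj_some_iff {ι : Type} (i : ι) (u : Option ι) :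
    (starGraph ι).Adj (some i) u ↔ u = none := by
  constructor
  · rintro (⟨h, _⟩ | ⟨h, _⟩)
    · exact absurd h (by simp)
    · exact h
  · rintro rfl; exact Or.inr ⟨rfl, by simp⟩

lemma star_adj_none_iff {ι : Type} (u : Option ι) :
    (starGraph ι).Adj none u ↔ u ≠ none := by
  constructor
  · rintro (⟨_, h⟩ | ⟨h, h2⟩)
    · exact h
    · exact absurd rfl h2
  · intro h; exact Or.inl ⟨rfl, h⟩

/-! ### Step constructors on the star -/

lemma step_root_tau {ι : Type} [DecidableEq ι] {L : Option ι → Q} {p' : Q}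
    (h : (L none, Act.tau, p') ∈ P.delta) :
    StepAny (starGraph ι) P L (Function.update L none p') := by
  refine ⟨none, (L none, Act.tau, p'), h, rfl, by simp, ?_⟩
  intro u hu
  exact Function.update_of_ne hu _ _

lemma step_leaf {ι : Type} [DecidableEq ι] {L : Option ι → Q} {i : ι} {t : Q × Act M × Q}
    (ht : t ∈ P.delta) (h1 : L (some i) = t.1)
    (h2 : t.2.1 = Act.tau ∨ ∃ m, t.2.1 = Act.brd m ∧ ¬ canRecv P (L none) m) :
    StepAny (starGraph ι) P L (Function.update L (some i) t.2.2) := by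
  obtain ⟨t1, α, t2⟩ := t
  refine ⟨some i, (t1, α, t2), ht, h1, by simp, ?_⟩
  rcases h2 with h2 | ⟨m, h2, hm⟩ <;> simp only at h2 <;> subst h2
  · intro u hu
    exact Function.update_of_ne hu _ _
  · constructor
    · intro u hadj
      have hu : u = none := (star_adj_some_iff i u).1 hadj
      subst hu
      refine Or.inr ⟨hm, ?_⟩
      exact Function.update_of_ne (by simp) _ _
    · intro u hu _
      exact Function.update_of_ne hu _ _

lemma step_root_brd {ι : Type} {L : Option ι → Q} {p' : Q} {m : M}
    (h : (L none, Act.brd m, p') ∈ P.delta) (ρ : ι → Q)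
    (hρ : ∀ i, (L (some i), Act.rcv m, ρ i) ∈ P.delta ∨
        (¬ canRecv P (L (some i)) m ∧ ρ i = L (some i))) :
    StepAny (starGraph ι) P L (fun u => Option.elim u p' ρ) := by
  refine ⟨none, (L none, Act.brd m, p'), h, rfl, rfl, ?_, ?_⟩
  · intro u hadj
    have hu : u ≠ none := (star_adj_none_iff u).1 hadj
    rcases u with _ | i
    · exact absurd rfl hu
    · exact hρ i
  · intro u hu hadj
    exact absurd ((star_adj_none_iff u).2 hu) hadj

/-! ### Moving a set of leaves -/

def setLeaves {ι : Type} [DecidableEq ι] (s : Finset ι) (p' : Q) (L : Option ι → Q) :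
    Option ι → Q
  | none => L none
  | some i => if i ∈ s then p' else L (some i)

lemma setLeaves_none {ι : Type} [DecidableEq ι] (s : Finset ι) (p' : Q) (L : Option ι → Q) :
    setLeaves s p' L none = L none := rfl

lemma setLeaves_some {ι : Type} [DecidableEq ι] (s : Finset ι) (p' : Q) (L : Option ι → Q)
    (i : ι) : setLeaves s p' L (some i) = if i ∈ s then p' else L (some i) := rfl

lemma reach_setLeaves {ι : Type} [DecidableEq ι] {L : Option ι → Q} {p p' : Q} {α : Act M}
    (ht : (p, α, p') ∈ P.delta)
    (hα : α = Act.tau ∨ ∃ m, α = Act.brd m ∧ ¬ canRecv P (L none) m)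
    (s : Finset ι) (hs : ∀ i ∈ s, L (some i) = p) :
    Reach (starGraph ι) P L (setLeaves s p' L) := by
  induction s using Finset.induction with
  | empty =>
      have : setLeaves (∅ : Finset ι) p' L = L := by
        funext u; rcases u with _ | i <;> simp [setLeaves]
      rw [this]
      exact Relation.ReflTransGen.refl
  | @insert a s ha ih =>
      have hreach := ih (fun i hi => hs i (Finset.mem_insert_of_mem hi))
      have hstep : StepAny (starGraph ι) P (setLeaves s p' L)
          (Function.update (setLeaves s p' L) (some a) p') := by
        apply step_leaf (t := (p, α, p')) ht
        · show setLeaves s p' L (some a) = p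
          rw [setLeaves_some, if_neg ha]
          exact hs a (Finset.mem_insert_self a s)
        · exact hα
      have heq : Function.update (setLeaves s p' L) (some a) p'
          = setLeaves (insert a s) p' L := by
        funext u
        rcases u with _ | i
        · rw [Function.update_of_ne (by simp)]; rfl
        · by_cases h : i = a
          · subst h
            rw [Function.update_self, setLeaves_some, if_pos (Finset.mem_insert_self i s)]
          · rw [Function.update_of_ne (by simp [h]), setLeaves_some, setLeaves_some]
            have : i ∈ insert a s ↔ i ∈ s := by simp [h]
            by_cases h2 : i ∈ s
            · rw [if_pos h2, if_pos (this.2 h2)]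
            · rw [if_neg h2, if_neg (fun hc => h2 (this.1 hc))]
      exact hreach.tail (heq ▸ hstep)

/-! ### Realizability with multiplicities -/

def Realize (P : Protocol Q M) (φ : Q → PTag) (pr : Q × Set Q) : Prop :=
  ∀ n : ℕ, ∃ (ι : Type) (_ : Fintype ι) (L : Option ι → Q),
    Reach (starGraph ι) P (initConf P) L ∧ L none = pr.1 ∧ bprintSet φ L = pr.2 ∧
    ∀ p ∈ pr.2, ∃ f : Fin n → ι, Function.Injective f ∧ ∀ j, L (some (f j)) = p

lemma bprint_congr {ι : Type} {L L' : Option ι → Q}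
    (h : ∀ i, L' (some i) = L (some i)) : bprintSet φ L' = bprintSet φ L := by
  ext r
  constructor <;> rintro ⟨h1, i, h2⟩
  · exact ⟨h1, i, by rw [← h i]; exact h2⟩
  · exact ⟨h1, i, by rw [h i]; exact h2⟩

lemma realize_root_tau {q q' : Q} {Λ : Set Q}
    (ht : (q, Act.tau, q') ∈ P.delta) (h : Realize P φ (q, Λ)) :
    Realize P φ (q', Λ) := by
  classical
  intro n
  obtain ⟨ι, fι, L, hre, hroot, hbp, hcop⟩ := h n
  replace hroot : L none = q := hroot
  replace hbp : bprintSet φ L = Λ := hbp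
  replace hcop : ∀ p ∈ Λ, ∃ f : Fin (n) → ι, Function.Injective f ∧
      ∀ j, L (some (f j)) = p := hcop
  refine ⟨ι, fι, Function.update L none q', ?_, by simp, ?_, ?_⟩
  · exact hre.tail (step_root_tau (by rw [hroot]; exact ht))
  · rw [bprint_congr (fun i => Function.update_of_ne (by simp) _ _)]
    exact hbp
  · intro p hp
    obtain ⟨f, hfinj, hf⟩ := hcop p hp
    exact ⟨f, hfinj, fun j => by rw [Function.update_of_ne (by simp)]; exact hf j⟩

lemma realize_root_brd (hφ : IsPhaseAssignment 1 P φ) {q q' : Q} {Λ : Set Q} {m : M}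
    (ht : (q, Act.brd m, q') ∈ P.delta) (h : Realize P φ (q, Λ)) :
    Realize P φ (q', {p | p ∈ Λ ∧ ¬ canRecv P p m}) := by
  classical
  intro n
  obtain ⟨ι, fι, L, hre, hroot, hbp, hcop⟩ := h n
  replace hroot : L none = q := hroot
  replace hbp : bprintSet φ L = Λ := hbp
  replace hcop : ∀ p ∈ Λ, ∃ f : Fin (n) → ι, Function.Injective f ∧
      ∀ j, L (some (f j)) = p := hcop
  set ρ : ι → Q := fun i =>
    if h : canRecv P (L (some i)) m then h.choose else L (some i) with hρ_def
  have hρ : ∀ i, (L (some i), Act.rcv m, ρ i) ∈ P.delta ∨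
      (¬ canRecv P (L (some i)) m ∧ ρ i = L (some i)) := by
    intro i
    rw [hρ_def]
    by_cases hc : canRecv P (L (some i)) m
    · simp only [dif_pos hc]; exact Or.inl hc.choose_spec
    · simp only [dif_neg hc]
      exact Or.inr ⟨hc, trivial⟩
  have hρ_stay : ∀ i, ¬ canRecv P (L (some i)) m → ρ i = L (some i) := by
    intro i hc; rw [hρ_def]; simp only [dif_neg hc]
  refine ⟨ι, fι, fun u => Option.elim u q' ρ, ?_, rfl, ?_, ?_⟩
  · exact hre.tail (step_root_brd (by rw [hroot]; exact ht) ρ hρ)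
  · ext r
    constructor
    · rintro ⟨hrQ, i, hi⟩
      simp only [Option.elim] at hi
      rcases hρ i with hrc | ⟨hnc, hstay⟩
      · rw [hi] at hrc
        exact absurd hrQ (rcv_not_Qb hφ hrc)
      · rw [hstay] at hi
        refine ⟨hbp ▸ ⟨hrQ, i, hi⟩, ?_⟩
        rw [← hi]; exact hnc
    · rintro ⟨hrΛ, hnc⟩
      rw [← hbp] at hrΛ
      obtain ⟨hrQ, i, hi⟩ := hrΛ
      refine ⟨hrQ, i, ?_⟩
      simp only [Option.elim]
      rw [hρ_stay i (by rwa [hi]), hi]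
  · rintro r ⟨hrΛ, hnc⟩
    obtain ⟨f, hfinj, hf⟩ := hcop r hrΛ
    refine ⟨f, hfinj, fun j => ?_⟩
    simp only [Option.elim]
    rw [hρ_stay (f j) (by rw [hf j]; exact hnc), hf j]

lemma realize_move {q p p' : Q} {Λ Λ' : Set Q} {α : Act M}
    (ht : (p, α, p') ∈ P.delta) (hp'Q : p' ∈ Qb φ) (hpΛ : p ∈ Λ)
    (hα : α = Act.tau ∨ ∃ m, α = Act.brd m ∧ ¬ canRecv P q m)
    (hΛ' : Λ' = Λ ∪ {p'} ∨ (p' ≠ p ∧ Λ' = (Λ \ {p}) ∪ {p'}))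
    (h : Realize P φ (q, Λ)) : Realize P φ (q, Λ') := by
  classical
  rcases hΛ' with rfl | ⟨hne, rfl⟩
  · -- Λ' = Λ ∪ {p'}
    intro n
    obtain ⟨ι, fι, L, hre, hroot, hbp, hcop⟩ := h (2 * n + 2)
    replace hroot : L none = q := hroot
    replace hbp : bprintSet φ L = Λ := hbp
    replace hcop : ∀ p ∈ Λ, ∃ f : Fin (2 * n + 2) → ι, Function.Injective f ∧
        ∀ j, L (some (f j)) = p := hcop
    obtain ⟨f, hfinj, hfp⟩ := hcop p hpΛ
    set s : Finset ι :=
      Finset.image (fun j : Fin (n + 1) => f ⟨j.1, by omega⟩) Finset.univ with hs_def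
    have hmem_s : ∀ i : ι, i ∈ s ↔ ∃ j : Fin (n + 1), f ⟨j.1, by omega⟩ = i := by
      intro i; simp [hs_def]
    have hs_p : ∀ i ∈ s, L (some i) = p := by
      intro i hi
      obtain ⟨j, rfl⟩ := (hmem_s i).1 hi
      exact hfp _
    have hlow_mem : ∀ (j : ℕ) (hj : j < 2 * n + 2), j < n + 1 → f ⟨j, hj⟩ ∈ s := by
      intro j hj hjn
      exact (hmem_s _).2 ⟨⟨j, hjn⟩, rfl⟩
    have hupper : ∀ (j : ℕ) (hj : j < 2 * n + 2), n + 1 ≤ j → f ⟨j, hj⟩ ∉ s := by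
      intro j hj hjn hmem
      obtain ⟨j', hj'⟩ := (hmem_s _).1 hmem
      have := congrArg Fin.val (hfinj hj')
      simp only [] at this
      omega
    have hα' : α = Act.tau ∨ ∃ m, α = Act.brd m ∧ ¬ canRecv P (L none) m := by
      rcases hα with h1 | ⟨m, h1, h2⟩
      · exact Or.inl h1
      · exact Or.inr ⟨m, h1, by rwa [hroot]⟩
    have hnotin : ∀ i : ι, L (some i) ≠ p → i ∉ s := fun i hi hc => hi (hs_p i hc)
    refine ⟨ι, fι, setLeaves s p' L, ?_, by rw [setLeaves_none]; exact hroot, ?_, ?_⟩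
    · exact hre.trans (reach_setLeaves ht hα' s hs_p)
    · ext r
      constructor
      · rintro ⟨hrQ, i, hi⟩
        rw [setLeaves_some] at hi
        by_cases hin : i ∈ s
        · rw [if_pos hin] at hi
          exact Or.inr hi.symm
        · rw [if_neg hin] at hi
          exact Or.inl (hbp ▸ ⟨hrQ, i, hi⟩)
      · intro hr
        by_cases hrp' : r = p'
        · subst hrp'
          refine ⟨hp'Q, f ⟨0, by omega⟩, ?_⟩
          rw [setLeaves_some, if_pos (hlow_mem 0 (by omega) (by omega))]
        · have hrΛ : r ∈ Λ := by
            rcases hr with hr | hr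
            · exact hr
            · exact absurd hr hrp'
          by_cases hrp : r = p
          · subst hrp
            have hrQ : r ∈ Qb φ := (hbp ▸ hrΛ : r ∈ bprintSet φ L).1
            refine ⟨hrQ, f ⟨n + 1, by omega⟩, ?_⟩
            rw [setLeaves_some, if_neg (hupper (n + 1) (by omega) le_rfl)]
            exact hfp _
          · obtain ⟨hrQ, i, hi⟩ := (hbp ▸ hrΛ : r ∈ bprintSet φ L)
            refine ⟨hrQ, i, ?_⟩
            rw [setLeaves_some, if_neg (hnotin i (by rw [hi]; exact hrp))]
            exact hi
    · intro r hr
      by_cases hrp' : r = p'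
      · subst hrp'
        refine ⟨fun j : Fin n => f ⟨j.1, by omega⟩, ?_, ?_⟩
        · intro a b hab
          have := congrArg Fin.val (hfinj hab)
          simp only [] at this
          exact Fin.ext this
        · intro j
          rw [setLeaves_some, if_pos (hlow_mem j.1 (by omega) (by omega))]
      · have hrΛ : r ∈ Λ := by
          rcases hr with hr | hr
          · exact hr
          · exact absurd hr hrp'
        by_cases hrp : r = p
        · subst hrp
          refine ⟨fun j : Fin n => f ⟨n + 1 + j.1, by omega⟩, ?_, ?_⟩
          · intro a b hab
            have := congrArg Fin.val (hfinj hab)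
            simp only [] at this
            exact Fin.ext (by omega)
          · intro j
            rw [setLeaves_some, if_neg (hupper (n + 1 + j.1) (by omega) (by omega))]
            exact hfp _
        · obtain ⟨g, hginj, hg⟩ := hcop r hrΛ
          refine ⟨fun j : Fin n => g ⟨j.1, by omega⟩, ?_, ?_⟩
          · intro a b hab
            have := congrArg Fin.val (hginj hab)
            simp only [] at this
            exact Fin.ext this
          · intro j
            rw [setLeaves_some, if_neg (hnotin _ (by rw [hg]; exact hrp))]
            exact hg _
  · -- Λ' = (Λ \ {p}) ∪ {p'}, p' ≠ p : move all p-leaves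
    intro n
    obtain ⟨ι, fι, L, hre, hroot, hbp, hcop⟩ := h n
    replace hroot : L none = q := hroot
    replace hbp : bprintSet φ L = Λ := hbp
    replace hcop : ∀ p ∈ Λ, ∃ f : Fin n → ι, Function.Injective f ∧
        ∀ j, L (some (f j)) = p := hcop
    set s : Finset ι := Finset.univ.filter (fun i => L (some i) = p) with hs_def
    have hmem_s : ∀ i : ι, i ∈ s ↔ L (some i) = p := by
      intro i; simp [hs_def]
    have hα' : α = Act.tau ∨ ∃ m, α = Act.brd m ∧ ¬ canRecv P (L none) m := by
      rcases hα with h1 | ⟨m, h1, h2⟩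
      · exact Or.inl h1
      · exact Or.inr ⟨m, h1, by rwa [hroot]⟩
    refine ⟨ι, fι, setLeaves s p' L, ?_, by rw [setLeaves_none]; exact hroot, ?_, ?_⟩
    · exact hre.trans (reach_setLeaves ht hα' s (fun i hi => (hmem_s i).1 hi))
    · ext r
      constructor
      · rintro ⟨hrQ, i, hi⟩
        rw [setLeaves_some] at hi
        by_cases hin : i ∈ s
        · rw [if_pos hin] at hi
          exact Or.inr hi.symm
        · rw [if_neg hin] at hi
          refine Or.inl ⟨hbp ▸ ⟨hrQ, i, hi⟩, ?_⟩
          intro hc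
          rw [Set.mem_singleton_iff] at hc
          exact hin ((hmem_s i).2 (by rw [hi, hc]))
      · intro hr
        by_cases hrp' : r = p'
        · subst hrp'
          obtain ⟨hpQ, i, hi⟩ := (hbp ▸ hpΛ : p ∈ bprintSet φ L)
          refine ⟨hp'Q, i, ?_⟩
          rw [setLeaves_some, if_pos ((hmem_s i).2 hi)]
        · rcases hr with ⟨hrΛ, hrp⟩ | hr
          · rw [Set.mem_singleton_iff] at hrp
            obtain ⟨hrQ, i, hi⟩ := (hbp ▸ hrΛ : r ∈ bprintSet φ L)
            refine ⟨hrQ, i, ?_⟩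
            rw [setLeaves_some, if_neg (fun hc => hrp (by rw [← hi, (hmem_s i).1 hc]))]
            exact hi
          · exact absurd hr hrp'
    · intro r hr
      by_cases hrp' : r = p'
      · subst hrp'
        obtain ⟨f, hfinj, hf⟩ := hcop p hpΛ
        refine ⟨f, hfinj, fun j => ?_⟩
        rw [setLeaves_some, if_pos ((hmem_s _).2 (hf j))]
      · have hrΛ : r ∈ Λ ∧ r ≠ p := by
          rcases hr with ⟨h1, h2⟩ | hr
          · exact ⟨h1, fun hc => h2 (Set.mem_singleton_iff.2 hc)⟩
          · exact absurd hr hrp'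
        obtain ⟨f, hfinj, hf⟩ := hcop r hrΛ.1
        refine ⟨f, hfinj, fun j => ?_⟩
        rw [setLeaves_some, if_neg (fun hc => hrΛ.2 (by rw [← hf j, (hmem_s _).1 hc]))]
        exact hf j

/-! ### bprint set equalities for a single-leaf move -/

lemma bprint_move_mem {ι : Type} {L L' : Option ι → Q} {i₀ : ι} {p p' : Q}
    (h1 : L (some i₀) = p) (h2 : L' (some i₀) = p')
    (hoth : ∀ i, i ≠ i₀ → L' (some i) = L (some i))
    (hp'Q : p' ∈ Qb φ) (hmem : p ∈ bprintSet φ L') :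
    bprintSet φ L' = bprintSet φ L ∪ {p'} := by
  ext r
  constructor
  · rintro ⟨hrQ, i, hi⟩
    by_cases hii : i = i₀
    · subst hii
      rw [h2] at hi
      exact Or.inr hi.symm
    · rw [hoth i hii] at hi
      exact Or.inl ⟨hrQ, i, hi⟩
  · intro hr
    rcases hr with ⟨hrQ, i, hi⟩ | hr
    · by_cases hii : i = i₀
      · subst hii
        rw [h1] at hi
        subst hi
        exact hmem
      · exact ⟨hrQ, i, by rw [hoth i hii]; exact hi⟩
    · rw [Set.mem_singleton_iff] at hr
      subst hr
      exact ⟨hp'Q, i₀, h2⟩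

lemma bprint_move_notmem {ι : Type} {L L' : Option ι → Q} {i₀ : ι} {p p' : Q}
    (h1 : L (some i₀) = p) (h2 : L' (some i₀) = p')
    (hoth : ∀ i, i ≠ i₀ → L' (some i) = L (some i))
    (hpQ : p ∈ Qb φ) (hp'Q : p' ∈ Qb φ) (hmem : p ∉ bprintSet φ L') :
    bprintSet φ L' = (bprintSet φ L \ {p}) ∪ {p'} := by
  ext r
  constructor
  · rintro ⟨hrQ, i, hi⟩
    by_cases hii : i = i₀
    · subst hii
      rw [h2] at hi
      exact Or.inr hi.symm
    · rw [hoth i hii] at hi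
      by_cases hrp : r = p
      · subst hrp
        exact absurd ⟨hrQ, i, by rw [hoth i hii]; exact hi⟩ hmem
      · exact Or.inl ⟨⟨hrQ, i, hi⟩, fun hc => hrp (Set.mem_singleton_iff.1 hc)⟩
  · intro hr
    rcases hr with ⟨⟨hrQ, i, hi⟩, hrp⟩ | hr
    · rw [Set.mem_singleton_iff] at hrp
      have hii : i ≠ i₀ := fun hc => hrp (by rw [← hi, hc, h1])
      exact ⟨hrQ, i, by rw [hoth i hii]; exact hi⟩
    · rw [Set.mem_singleton_iff] at hr
      subst hr
      exact ⟨hp'Q, i₀, h2⟩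

lemma bprint_move_notQb {ι : Type} {L L' : Option ι → Q} {i₀ : ι} {p p' : Q}
    (h1 : L (some i₀) = p) (h2 : L' (some i₀) = p')
    (hoth : ∀ i, i ≠ i₀ → L' (some i) = L (some i))
    (hpQ : p ∉ Qb φ) (hp'Q : p' ∉ Qb φ) :
    bprintSet φ L' = bprintSet φ L := by
  ext r
  constructor
  · rintro ⟨hrQ, i, hi⟩
    by_cases hii : i = i₀
    · subst hii
      rw [h2] at hi
      subst hi
      exact absurd hrQ hp'Q
    · rw [hoth i hii] at hi
      exact ⟨hrQ, i, hi⟩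
  · rintro ⟨hrQ, i, hi⟩
    by_cases hii : i = i₀
    · subst hii
      rw [h1] at hi
      subst hi
      exact absurd hrQ hpQ
    · exact ⟨hrQ, i, by rw [hoth i hii]; exact hi⟩

/-! ### Abstract step preserves realizability -/

lemma realize_printStep (hφ : IsPhaseAssignment 1 P φ) {pr pr' : Q × Set Q}
    (h : PrintStep P φ pr pr') (hr : Realize P φ pr) : Realize P φ pr' := by
  obtain ⟨ι, fι, L, L', ⟨v, t, hstep⟩, hQ, hQ', hpr, hpr'⟩ := h
  subst hpr hpr'
  obtain ⟨t1, α, t2⟩ := t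
  obtain ⟨htd, hv1, hv2, hmatch⟩ := hstep
  rcases v with _ | i₀
  · -- root moves
    rcases α with m | m | _
    · -- root broadcast
      simp only at hv1 hv2 hmatch
      obtain ⟨hadj, _⟩ := hmatch
      have hset : bprintSet φ L' = {p | p ∈ bprintSet φ L ∧ ¬ canRecv P p m} := by
        ext r
        constructor
        · rintro ⟨hrQ, i, hi⟩
          rcases hadj (some i) ((star_adj_none_iff _).2 (by simp)) with hrc | ⟨hnc, hstay⟩
          · rw [hi] at hrc
            exact absurd hrQ (rcv_not_Qb hφ hrc)
          · rw [hstay] at hi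
            refine ⟨⟨hrQ, i, hi⟩, by rw [← hi]; exact hnc⟩
        · rintro ⟨⟨hrQ, i, hi⟩, hnc⟩
          rcases hadj (some i) ((star_adj_none_iff _).2 (by simp)) with hrc | ⟨_, hstay⟩
          · rw [hi] at hrc
            exact absurd ⟨_, hrc⟩ hnc
          · exact ⟨hrQ, i, by rw [hstay]; exact hi⟩
      rw [hset]
      exact realize_root_brd hφ (by rw [hv1, hv2]; exact htd) hr
    · exact hmatch.elim
    · -- root tau
      simp only at hv1 hv2 hmatch
      have hset : bprintSet φ L' = bprintSet φ L :=
        bprint_congr (fun i => hmatch (some i) (by simp))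
      rw [hset]
      exact realize_root_tau (by rw [hv1, hv2]; exact htd) hr
  · -- leaf i₀ moves
    rcases α with m | m | _
    · -- leaf broadcast
      simp only at hv1 hv2 hmatch
      obtain ⟨hadj, hnadj⟩ := hmatch
      have hrootcase := hadj none ((star_adj_some_iff i₀ none).2 rfl)
      have hroot : L' none = L none ∧ ¬ canRecv P (L none) m := by
        rcases hrootcase with hrc | ⟨hnc, hstay⟩
        · exact absurd hQ' (rcv_not_Qb hφ hrc)
        · exact ⟨hstay, hnc⟩
      have hoth : ∀ i, i ≠ i₀ → L' (some i) = L (some i) := by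
        intro i hi
        refine hnadj (some i) (by simp [hi]) ?_
        rw [star_adj_some_iff]
        simp
      have htags := brd_tag hφ htd
      have hpΛ : t1 ∈ bprintSet φ L := ⟨htags.1, i₀, hv1⟩
      have hα : (Act.brd m : Act M) = Act.tau ∨
          ∃ m', (Act.brd m : Act M) = Act.brd m' ∧ ¬ canRecv P (L none) m' :=
        Or.inr ⟨m, rfl, hroot.2⟩
      rw [hroot.1] at hQ' ⊢
      by_cases hmem : t1 ∈ bprintSet φ L'
      · rw [bprint_move_mem hv1 hv2 hoth htags.2 hmem]
        exact realize_move htd htags.2 hpΛ hα (Or.inl rfl) hr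
      · have hne : t2 ≠ t1 := by
          intro hc
          exact hmem (hc ▸ ⟨htags.2, i₀, hv2⟩)
        rw [bprint_move_notmem hv1 hv2 hoth htags.1 htags.2 hmem]
        exact realize_move htd htags.2 hpΛ hα (Or.inr ⟨hne, rfl⟩) hr
    · exact hmatch.elim
    · -- leaf tau
      simp only at hv1 hv2 hmatch
      have hroot : L' none = L none := hmatch none (by simp)
      have hoth : ∀ i, i ≠ i₀ → L' (some i) = L (some i) := by
        intro i hi
        exact hmatch (some i) (by simp [hi])
      have htag := tau_tag hφ htd
      have hα : (Act.tau : Act M) = Act.tau ∨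
          ∃ m', (Act.tau : Act M) = Act.brd m' ∧ ¬ canRecv P (L none) m' := Or.inl rfl
      rw [hroot] at hQ' ⊢
      by_cases hpQ : t1 ∈ Qb φ
      · have hp'Q : t2 ∈ Qb φ := by
          rcases hpQ with h1 | h1 <;> [exact Or.inl (htag ▸ h1); exact Or.inr (htag ▸ h1)]
        have hpΛ : t1 ∈ bprintSet φ L := ⟨hpQ, i₀, hv1⟩
        by_cases hmem : t1 ∈ bprintSet φ L'
        · rw [bprint_move_mem hv1 hv2 hoth hp'Q hmem]
          exact realize_move htd hp'Q hpΛ hα (Or.inl rfl) hr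
        · have hne : t2 ≠ t1 := by
            intro hc
            exact hmem (hc ▸ ⟨hp'Q, i₀, hv2⟩)
          rw [bprint_move_notmem hv1 hv2 hoth hpQ hp'Q hmem]
          exact realize_move htd hp'Q hpΛ hα (Or.inr ⟨hne, rfl⟩) hr
      · have hp'Q : t2 ∉ Qb φ := by
          intro hc
          rcases hc with h1 | h1 <;> [exact hpQ (Or.inl (htag ▸ h1)); exact hpQ (Or.inr (htag ▸ h1))]
        rw [bprint_move_notQb hv1 hv2 hoth hpQ hp'Q]
        exact hr

lemma realize_rtg (hφ : IsPhaseAssignment 1 P φ) {pr pr' : Q × Set Q}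
    (h : Relation.ReflTransGen (PrintStep P φ) pr pr') (hr : Realize P φ pr) :
    Realize P φ pr' := by
  induction h with
  | refl => exact hr
  | tail _ hstep ih => exact realize_printStep hφ hstep ih

lemma realize_init_empty : Realize P φ (P.qin, (∅ : Set Q)) := by
  intro n
  refine ⟨Fin 0, inferInstance, initConf P, Relation.ReflTransGen.refl, rfl, ?_, ?_⟩
  · ext r
    simp only [bprintSet, Set.mem_setOf_eq, Set.mem_empty_iff_false, iff_false]
    rintro ⟨_, i, _⟩
    exact i.elim0
  · rintro p ⟨⟩

lemma realize_init_full (hφ : IsPhaseAssignment 1 P φ) :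
    Realize P φ (P.qin, ({P.qin} : Set Q)) := by
  intro n
  refine ⟨Fin (n + 1), inferInstance, initConf P, Relation.ReflTransGen.refl, rfl, ?_, ?_⟩
  · ext r
    simp only [bprintSet, Set.mem_setOf_eq, Set.mem_singleton_iff]
    constructor
    · rintro ⟨_, i, hi⟩
      exact hi.symm
    · rintro rfl
      exact ⟨qin_Qb hφ, ⟨0, by omega⟩, rfl⟩
  · rintro p hp
    rw [Set.mem_singleton_iff] at hp
    subst hp
    refine ⟨fun j => ⟨j.1, by omega⟩, ?_, fun j => rfl⟩
    intro a b hab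
    have h2 := congrArg Fin.val hab
    simp only [] at h2
    exact Fin.ext h2

/-! ### Completeness direction -/

lemma root_Qb_back (hφ : IsPhaseAssignment 1 P φ) {ι : Type} {L L' : Option ι → Q}
    (h : StepAny (starGraph ι) P L L') (h' : L' none ∈ Qb φ) : L none ∈ Qb φ := by
  obtain ⟨v, t, hstep⟩ := h
  obtain ⟨t1, α, t2⟩ := t
  obtain ⟨htd, hv1, hv2, hmatch⟩ := hstep
  rcases v with _ | i₀
  · rcases α with m | m | _
    · simp only at hv1 hv2
      rw [hv1]
      exact (brd_tag hφ htd).1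
    · exact hmatch.elim
    · simp only at hv1 hv2
      have htag := tau_tag hφ htd
      rw [hv2] at h'
      rw [hv1]
      rcases h' with h1 | h1 <;> [exact Or.inl (htag ▸ h1); exact Or.inr (htag ▸ h1)]
  · rcases α with m | m | _
    · simp only at hmatch
      obtain ⟨hadj, _⟩ := hmatch
      rcases hadj none ((star_adj_some_iff i₀ none).2 rfl) with hrc | ⟨_, hstay⟩
      · exact absurd h' (rcv_not_Qb hφ hrc)
      · rwa [hstay] at h'
    · exact hmatch.elim
    · simp only at hmatch
      rwa [hmatch none (by simp)] at h'

lemma reach_printsteps (hφ : IsPhaseAssignment 1 P φ) {ι : Type} [Fintype ι]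
    {L : Option ι → Q} (h : Reach (starGraph ι) P (initConf P) L) (hQ : L none ∈ Qb φ) :
    Relation.ReflTransGen (PrintStep P φ)
      (P.qin, bprintSet φ (initConf P : Option ι → Q)) (L none, bprintSet φ L) := by
  induction h with
  | refl => exact Relation.ReflTransGen.refl
  | @tail b c hab hbc ih =>
      have hbQ : b none ∈ Qb φ := root_Qb_back hφ hbc hQ
      exact (ih hbQ).tail ⟨ι, inferInstance, b, c, hbc, hbQ, hQ, rfl, rfl⟩

end PrintAbstractionProof

/-- soundness and completeness of the broadcast-print abstraction. -/
theorem print_abstraction_sound_complete {Q M : Type} [Fintype Q]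
    (P : Protocol Q M) (φ : Q → PTag) (hφ : IsPhaseAssignment 1 P φ)
    (q : Q) (Λ : Set Q) :
    (∃ Λin : Set Q, (Λin = ∅ ∨ Λin = {P.qin}) ∧
        Relation.ReflTransGen (PrintStep P φ) (P.qin, Λin) (q, Λ)) ↔
    (∃ (ι : Type) (_ : Fintype ι) (L : Option ι → Q),
        Reach (starGraph ι) P (initConf P) L ∧
        L none ∈ Qb φ ∧ L none = q ∧ bprintSet φ L = Λ) := by
  constructor
  · rintro ⟨Λin, hΛin, hrun⟩
    have hreal0 : Realize P φ (P.qin, Λin) := by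
      rcases hΛin with rfl | rfl
      · exact realize_init_empty
      · exact realize_init_full hφ
    have hreal := realize_rtg hφ hrun hreal0
    obtain ⟨ι, fι, L, hre, hroot, hbp, _⟩ := hreal 0
    have hq : q ∈ Qb φ := by
      rcases Relation.ReflTransGen.cases_tail hrun with heq | ⟨c, _, hstep⟩
      · have hq' : q = P.qin := congrArg Prod.fst heq
        rw [hq']; exact qin_Qb hφ
      · obtain ⟨ι', _, L0, L0', _, _, hQ', _, hpr'⟩ := hstep
        have : q = L0' none := congrArg Prod.fst hpr'
        rw [this]; exact hQ'
    exact ⟨ι, fι, L, hre, by rw [hroot]; exact hq, hroot, hbp⟩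
  · rintro ⟨ι, fι, L, hre, hQ, hq, hbp⟩
    refine ⟨bprintSet φ (initConf P : Option ι → Q), ?_, ?_⟩
    · by_cases hι : Nonempty ι
      · refine Or.inr ?_
        ext r
        simp only [bprintSet, Set.mem_setOf_eq, Set.mem_singleton_iff]
        constructor
        · rintro ⟨_, i, hi⟩
          exact hi.symm
        · rintro rfl
          exact ⟨qin_Qb hφ, hι.some, rfl⟩
      · refine Or.inl ?_
        ext r
        simp only [bprintSet, Set.mem_setOf_eq, Set.mem_empty_iff_false, iff_false]
        rintro ⟨_, i, _⟩
        exact hι ⟨i⟩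
    · have := reach_printsteps hφ hre hQ
      rwa [hq, hbp] at this


end BN
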